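/- B = ℂ[X,Y] is a free module of rank 4 over the ℂ-subalgebra A generated by X²Y and X²+Y. -/

import Mathlib

noncomputable section

open MvPolynomial

/-- The variable `X` of `ℂ[X,Y]`. -/
def Xv : MvPolynomial (Fin 2) ℂ := X 0

/-- The variable `Y` of `ℂ[X,Y]`. -/
def Yv : MvPolynomial (Fin 2) ℂ := X 1

/-- The subalgebra `A = ℂ[X²Y, X²+Y]` of `B = ℂ[X,Y]`. -/
def A16 : Subalgebra ℂ (MvPolynomial (Fin 2) ℂ) :=
  Algebra.adjoin ℂ {Xv ^ 2 * Yv, Xv ^ 2 + Yv}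

namespace Ex16

abbrev B := MvPolynomial (Fin 2) ℂ

/-- The sign automorphism `X ↦ -X, Y ↦ Y`. -/
def sg : B →ₐ[ℂ] B := aeval ![-Xv, Yv]

/-- The embedding `X ↦ X, Y ↦ Y²`. -/
def mu : B →ₐ[ℂ] B := aeval ![Xv, Yv ^ 2]

/-- The embedding `X ↦ Y, Y ↦ X²`. -/
def nu : B →ₐ[ℂ] B := aeval ![Yv, Xv ^ 2]

lemma sg_X : sg Xv = -Xv := by simp [sg, Xv, Yv]
lemma mu_X : mu Xv = Xv := by simp [mu, Xv, Yv]
lemma nu_X : nu Xv = Yv := by simp [nu, Xv, Yv]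

lemma sg_fix {a : B} (ha : a ∈ A16) : sg a = a := by
  have h : A16 ≤ AlgHom.equalizer sg (AlgHom.id ℂ B) := by
    apply Algebra.adjoin_le
    rintro x (rfl | rfl) <;>
      · rw [SetLike.mem_coe, AlgHom.mem_equalizer]
        simp [sg, Xv, Yv]
  exact h ha

lemma mu_eq_nu {a : B} (ha : a ∈ A16) : mu a = nu a := by
  have h : A16 ≤ AlgHom.equalizer mu nu := by
    apply Algebra.adjoin_le
    rintro x (rfl | rfl) <;>
      · rw [SetLike.mem_coe, AlgHom.mem_equalizer]
        simp [mu, nu, Xv, Yv]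
        ring
  exact h ha

/-- The squaring map on one-variable polynomials is injective. -/
lemma aeval_X_sq_injective :
    Function.Injective (Polynomial.aeval (Polynomial.X ^ 2 : Polynomial ℂ) :
      Polynomial ℂ →ₐ[ℂ] Polynomial ℂ) := by
  rw [injective_iff_map_eq_zero]
  intro p hp
  have hc : p.comp (Polynomial.X ^ 2) = 0 := by
    rwa [Polynomial.comp_eq_aeval]
  rcases Polynomial.comp_eq_zero_iff.mp hc with h | ⟨_, h⟩
  · exact h
  · exfalso
    have : (Polynomial.X ^ 2 : Polynomial ℂ).coeff 0 = 0 := by simp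
    rw [this, map_zero] at h
    exact pow_ne_zero 2 Polynomial.X_ne_zero h

/-- The squaring map on `MvPolynomial (Fin 1) ℂ` is injective. -/
lemma psi_injective :
    Function.Injective (aeval ![(X 0 : MvPolynomial (Fin 1) ℂ) ^ 2] :
      MvPolynomial (Fin 1) ℂ →ₐ[ℂ] MvPolynomial (Fin 1) ℂ) := by
  set ψ : MvPolynomial (Fin 1) ℂ →ₐ[ℂ] MvPolynomial (Fin 1) ℂ := aeval ![(X 0) ^ 2]
  set e : MvPolynomial (Fin 1) ℂ ≃ₐ[ℂ] Polynomial (MvPolynomial (Fin 0) ℂ) :=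
    MvPolynomial.finSuccEquiv ℂ 0
  set e2 : Polynomial (MvPolynomial (Fin 0) ℂ) ≃ₐ[ℂ] Polynomial ℂ :=
    Polynomial.mapAlgEquiv (MvPolynomial.isEmptyAlgEquiv ℂ (Fin 0))
  set f : MvPolynomial (Fin 1) ℂ →ₐ[ℂ] Polynomial ℂ := (e2.toAlgHom.comp e.toAlgHom)
  have key : f.comp ψ =
      ((Polynomial.aeval (Polynomial.X ^ 2 : Polynomial ℂ)).comp f) := by
    apply MvPolynomial.algHom_ext
    intro i
    fin_cases i
    simp [f, ψ, e, e2, MvPolynomial.finSuccEquiv_X_zero]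
  intro p q hpq
  have h1 : f (ψ p) = f (ψ q) := by rw [hpq]
  have h2 : (f.comp ψ) p = (f.comp ψ) q := h1
  rw [key] at h2
  have h3 : f p = f q := aeval_X_sq_injective h2
  have hf : Function.Injective f := by
    intro x y hxy
    exact e.injective (e2.injective hxy)
  exact hf h3

lemma mu_injective : Function.Injective (mu : B →ₐ[ℂ] B) := by
  set ψ : MvPolynomial (Fin 1) ℂ →ₐ[ℂ] MvPolynomial (Fin 1) ℂ := aeval ![(X 0) ^ 2]
  set e : B ≃ₐ[ℂ] Polynomial (MvPolynomial (Fin 1) ℂ) := MvPolynomial.finSuccEquiv ℂ 1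
  have key : (Polynomial.mapAlgHom ψ).comp e.toAlgHom = e.toAlgHom.comp mu := by
    apply MvPolynomial.algHom_ext
    intro i
    fin_cases i
    · show (Polynomial.mapAlgHom ψ) (e (X 0)) = e (mu (X 0))
      have h0 : e (X 0) = Polynomial.X := MvPolynomial.finSuccEquiv_X_zero
      rw [h0]
      have hmu0 : mu (X 0) = X 0 := mu_X
      rw [hmu0, h0]
      simp
    · show (Polynomial.mapAlgHom ψ) (e (X 1)) = e (mu (X 1))
      have h1 : e (X 1) = Polynomial.C (X 0) := by
        have := MvPolynomial.finSuccEquiv_X_succ (R := ℂ) (n := 1) (j := 0)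
        simpa using this
      have hmu1 : mu (X 1) = (X 1) ^ 2 := by simp [mu, Xv, Yv]
      rw [h1, hmu1, map_pow, h1]
      simp [ψ]
  intro p q hpq
  have hcomp : ∀ r : B, (Polynomial.mapAlgHom ψ) (e r) = e (mu r) := fun r =>
    DFunLike.congr_fun key r
  have h2 : (Polynomial.mapAlgHom ψ) (e p) = (Polynomial.mapAlgHom ψ) (e q) := by
    rw [hcomp p, hcomp q, hpq]
  have hmap : Function.Injective (Polynomial.map (ψ : MvPolynomial (Fin 1) ℂ →+* MvPolynomial (Fin 1) ℂ)) :=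
    Polynomial.map_injective _ psi_injective
  have : e p = e q := hmap h2
  exact e.injective this

lemma X_sq_ne_Y_sq : (Xv ^ 2 : B) ≠ Yv ^ 2 := by
  intro h
  have := congrArg (eval (![1, 0] : Fin 2 → ℂ)) h
  simp [Xv, Yv] at this

/-- Core independence lemma: `1` and `X²` are independent over `A`. -/
lemma rank_two_step {a b : B} (ha : a ∈ A16) (hb : b ∈ A16)
    (h : a + b * Xv ^ 2 = 0) : a = 0 ∧ b = 0 := by
  have h1 := congrArg mu h
  have h2 := congrArg nu h
  rw [map_add, map_mul, map_pow, mu_X, map_zero] at h1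
  rw [map_add, map_mul, map_pow, nu_X, map_zero] at h2
  rw [← mu_eq_nu ha, ← mu_eq_nu hb] at h2
  have h3 : mu b * (Xv ^ 2 - Yv ^ 2) = 0 := by linear_combination h1 - h2
  rcases mul_eq_zero.mp h3 with hb0 | hxy
  · have hb' : b = 0 := mu_injective (by rw [map_zero]; exact hb0)
    refine ⟨?_, hb'⟩
    rw [hb', zero_mul, add_zero] at h
    exact h
  · exact absurd (sub_eq_zero.mp hxy) X_sq_ne_Y_sq

/-- Full independence: `1, X, X², X³` are independent over `A`. -/
lemma quad_step {a0 a1 a2 a3 : B} (h0 : a0 ∈ A16) (h1 : a1 ∈ A16)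
    (h2 : a2 ∈ A16) (h3 : a3 ∈ A16)
    (h : a0 + a1 * Xv + a2 * Xv ^ 2 + a3 * Xv ^ 3 = 0) :
    a0 = 0 ∧ a1 = 0 ∧ a2 = 0 ∧ a3 = 0 := by
  have hs := congrArg sg h
  simp only [map_add, map_mul, map_pow, sg_X, map_zero] at hs
  rw [sg_fix h0, sg_fix h1, sg_fix h2, sg_fix h3] at hs
  have heven : a0 + a2 * Xv ^ 2 = 0 := by
    have : (2 : B) * (a0 + a2 * Xv ^ 2) = 0 := by linear_combination h + hs
    rcases mul_eq_zero.mp this with h' | h'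
    · exact absurd h' two_ne_zero
    · exact h'
  have hodd : a1 + a3 * Xv ^ 2 = 0 := by
    have : (2 : B) * Xv * (a1 + a3 * Xv ^ 2) = 0 := by linear_combination h - hs
    rcases mul_eq_zero.mp this with h' | h'
    · rcases mul_eq_zero.mp h' with h'' | h''
      · exact absurd h'' two_ne_zero
      · exact absurd h'' (MvPolynomial.X_ne_zero 0)
    · exact h'
  obtain ⟨e0, e2⟩ := rank_two_step h0 h2 heven
  obtain ⟨e1, e3⟩ := rank_two_step h1 h3 hodd
  exact ⟨e0, e1, e2, e3⟩

lemma u_mem : Xv ^ 2 * Yv ∈ A16 := Algebra.subset_adjoin (by left; rfl)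
lemma v_mem : Xv ^ 2 + Yv ∈ A16 := Algebra.subset_adjoin (by right; rfl)

def bvec : Fin 4 → B := ![1, Xv, Xv ^ 2, Xv ^ 3]

lemma smul_def' (a : A16) (m : B) : a • m = (a : B) * m := rfl

lemma linind : LinearIndependent A16 bvec := by
  rw [Fintype.linearIndependent_iff]
  intro g hg
  have hsum : (g 0 : B) + (g 1 : B) * Xv + (g 2 : B) * Xv ^ 2 + (g 3 : B) * Xv ^ 3 = 0 := by
    have := hg
    rw [Fin.sum_univ_four] at this
    simpa [bvec, smul_def', mul_comm] using this
  obtain ⟨e0, e1, e2, e3⟩ := quad_step (g 0).2 (g 1).2 (g 2).2 (g 3).2 hsum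
  intro i
  fin_cases i <;> exact Subtype.ext (by assumption)

def M : Submodule A16 B := Submodule.span A16 (Set.range bvec)

lemma one_mem_M : (1 : B) ∈ M := Submodule.subset_span ⟨0, rfl⟩
lemma X_mem_M : Xv ∈ M := Submodule.subset_span ⟨1, rfl⟩
lemma X2_mem_M : Xv ^ 2 ∈ M := Submodule.subset_span ⟨2, rfl⟩
lemma X3_mem_M : Xv ^ 3 ∈ M := Submodule.subset_span ⟨3, rfl⟩

lemma X4_mem_M : Xv ^ 4 ∈ M := by
  have key : Xv ^ 4 = (⟨Xv ^ 2 + Yv, v_mem⟩ : A16) • (Xv ^ 2) -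
      (⟨Xv ^ 2 * Yv, u_mem⟩ : A16) • (1 : B) := by
    rw [smul_def', smul_def']
    push_cast
    ring
  rw [key]
  exact sub_mem (Submodule.smul_mem _ _ X2_mem_M) (Submodule.smul_mem _ _ one_mem_M)

lemma mul_X_mem_M {m : B} (hm : m ∈ M) : m * Xv ∈ M := by
  induction hm using Submodule.span_induction with
  | mem x hx =>
    obtain ⟨i, rfl⟩ := hx
    fin_cases i
    · simpa [bvec] using X_mem_M
    · simpa [bvec, sq] using X2_mem_M
    · have : Xv ^ 2 * Xv = Xv ^ 3 := by ring
      simpa [bvec, this] using X3_mem_M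
    · have : Xv ^ 3 * Xv = Xv ^ 4 := by ring
      simpa [bvec, this] using X4_mem_M
  | zero => simp only [zero_mul]; exact M.zero_mem
  | add x y hx hy ihx ihy => simpa [add_mul] using add_mem ihx ihy
  | smul a x hx ih => simpa [smul_def', mul_assoc] using M.smul_mem a ih

lemma mul_Y_mem_M {m : B} (hm : m ∈ M) : m * Yv ∈ M := by
  have key : m * Yv = (⟨Xv ^ 2 + Yv, v_mem⟩ : A16) • m - (m * Xv) * Xv := by
    rw [smul_def']
    push_cast
    ring
  rw [key]
  exact sub_mem (M.smul_mem _ hm) (mul_X_mem_M (mul_X_mem_M hm))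

lemma span_top : ∀ p : B, p ∈ M := by
  intro p
  induction p using MvPolynomial.induction_on with
  | C c =>
    have : (C c : B) = (⟨C c, A16.algebraMap_mem c⟩ : A16) • (1 : B) := by
      rw [smul_def']; simp
    rw [this]
    exact M.smul_mem _ one_mem_M
  | add p q hp hq => exact add_mem hp hq
  | mul_X p i hp =>
    fin_cases i
    · exact mul_X_mem_M hp
    · exact mul_Y_mem_M hp

def basis16 : Module.Basis (Fin 4) A16 B :=
  Module.Basis.mk linind (by rw [top_le_iff, eq_top_iff]; intro x _; exact span_top x)

end Ex16

theorem example_free_rank_four :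
    Module.Free A16 (MvPolynomial (Fin 2) ℂ) ∧
    Module.Finite A16 (MvPolynomial (Fin 2) ℂ) ∧
    Module.finrank A16 (MvPolynomial (Fin 2) ℂ) = 4 := by
  refine ⟨Module.Free.of_basis Ex16.basis16, Module.Finite.of_basis Ex16.basis16, ?_⟩
  rw [Module.finrank_eq_card_basis Ex16.basis16]
  simp
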